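/- For all (X,Y) ∈ ℝ², F(X, C_{−1} − Y) = F(X,Y) + C_{−1} − 2Y; consequently the tropical curve Γ̃ is symmetric with respect to the line Y = C_{−1}/2, i.e., the involution ι(X,Y) = (X, C_{−1} − Y) satisfies: (X,Y) ∈ Γ̃ if and only if (X, C_{−1} − Y) ∈ Γ̃. -/

import Mathlib

/-- The tropical polynomial
`F(X,Y) = min(2Y, Y + min((g+1)X, C_g + gX, …, C_1 + X, C_0), C_{-1})`. -/
noncomputable def tropF (g : ℕ) (Cm1 : ℝ) (C : ℕ → ℝ) (P : ℝ × ℝ) : ℝ :=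
  min (2 * P.2)
    (min
      (P.2 + min (((g : ℝ) + 1) * P.1)
        ((Finset.range (g + 1)).inf' ⟨0, Finset.mem_range.mpr (Nat.succ_pos g)⟩
          (fun i => C i + (i : ℝ) * P.1)))
      Cm1)

private lemma min_lem (m Y Cm1 : ℝ) :
    min (2 * (Cm1 - Y)) (min ((Cm1 - Y) + m) Cm1)
      = min (2 * Y) (min (Y + m) Cm1) + Cm1 - 2 * Y := by
  simp only [min_def]
  split_ifs <;> linarith

/-- `F(X, C_{-1} - Y) = F(X, Y) + C_{-1} - 2Y`; consequently the tropical curve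
`Γ̃` (the non-differentiability locus of `F`) is symmetric with respect to the
line `Y = C_{-1}/2`. -/
theorem tropF_symmetry (g : ℕ) (hg : 1 ≤ g) (Cm1 : ℝ) (C : ℕ → ℝ) :
    (∀ X Y : ℝ, tropF g Cm1 C (X, Cm1 - Y) = tropF g Cm1 C (X, Y) + Cm1 - 2 * Y) ∧
    (∀ X Y : ℝ,
      ¬ DifferentiableAt ℝ (tropF g Cm1 C) (X, Y) ↔
      ¬ DifferentiableAt ℝ (tropF g Cm1 C) (X, Cm1 - Y)) := by
  have key : ∀ X Y : ℝ, tropF g Cm1 C (X, Cm1 - Y) = tropF g Cm1 C (X, Y) + Cm1 - 2 * Y := by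
    intro X Y
    simp only [tropF]
    exact min_lem _ _ _
  refine ⟨key, ?_⟩
  have hι : Differentiable ℝ (fun p : ℝ × ℝ => ((p.1, Cm1 - p.2) : ℝ × ℝ)) :=
    differentiable_fst.prodMk ((differentiable_const _).sub differentiable_snd)
  have main : ∀ X Y : ℝ, DifferentiableAt ℝ (tropF g Cm1 C) (X, Y) →
      DifferentiableAt ℝ (tropF g Cm1 C) (X, Cm1 - Y) := by
    intro X Y h
    have h2 : DifferentiableAt ℝ (fun p : ℝ × ℝ => tropF g Cm1 C (p.1, Cm1 - p.2)) (X, Y) := by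
      have heq : (fun p : ℝ × ℝ => tropF g Cm1 C (p.1, Cm1 - p.2))
          = fun p : ℝ × ℝ => tropF g Cm1 C p + Cm1 - 2 * p.2 := by
        funext p
        have := key p.1 p.2
        simpa using this
      rw [heq]
      exact (h.add_const Cm1).sub (differentiableAt_snd.const_mul 2)
    have h3 : DifferentiableAt ℝ
        ((fun p : ℝ × ℝ => tropF g Cm1 C (p.1, Cm1 - p.2)) ∘
          (fun p : ℝ × ℝ => ((p.1, Cm1 - p.2) : ℝ × ℝ))) (X, Cm1 - Y) := by
      apply DifferentiableAt.comp
      · simpa using h2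
      · exact (hι (X, Cm1 - Y))
    have heq2 : ((fun p : ℝ × ℝ => tropF g Cm1 C (p.1, Cm1 - p.2)) ∘
          (fun p : ℝ × ℝ => ((p.1, Cm1 - p.2) : ℝ × ℝ))) = tropF g Cm1 C := by
      funext p
      simp [Function.comp]
    rwa [heq2] at h3
  intro X Y
  constructor
  · intro hnd hd
    exact hnd (by simpa using main X (Cm1 - Y) hd)
  · intro hnd hd
    exact hnd (main X Y hd)
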